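/- Two skew-symmetric n×n real matrices ω₁ and ω₂ lie in the same O(n)-conjugation orbit (i.e. there exists r ∈ O(n) with ω₂ = r ω₁ r⁻¹) if and only if they have the same characteristic polynomial. (The adjoint orbits of O(n) are the isospectral sets of skew-symmetric matrices.) -/

import Mathlib

open Matrix

abbrev Mat (n : ℕ) := Matrix (Fin n) (Fin n) ℝ
abbrev Vec (n : ℕ) := Fin n → ℝ

/-- `r` is an orthogonal matrix. -/
def IsOrth {n : ℕ} (r : Mat n) : Prop := r * rᵀ = 1 ∧ rᵀ * r = 1

/-- `ω` is skew-symmetric. -/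
def IsSkew {n : ℕ} (ω : Mat n) : Prop := ωᵀ = -ω

/-- Adjoint action of `(r,d) ∈ E(n)` on `(ω,v) ∈ so(n) × ℝⁿ`. -/
noncomputable def Ad {n : ℕ} (r : Mat n) (d : Vec n) (ω : Mat n) (v : Vec n) :
    Mat n × Vec n :=
  (r * ω * r⁻¹, r *ᵥ v - (r * ω * r⁻¹) *ᵥ d)

/-- The momentum map `μ(p,d) = ½(p dᵀ − d pᵀ)`. -/
noncomputable def mu {n : ℕ} (p d : Vec n) : Mat n :=
  (1/2 : ℝ) • (vecMulVec p d - vecMulVec d p)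

/-- Coadjoint action of `(r,d) ∈ E(n)` on `(L,p) ∈ so(n)* × (ℝⁿ)* ≃ so(n) × ℝⁿ`. -/
noncomputable def CoAd {n : ℕ} (r : Mat n) (d : Vec n) (L : Mat n) (p : Vec n) :
    Mat n × Vec n :=
  (r * L * r⁻¹ + mu (r *ᵥ p) d, r *ᵥ p)


section Aux
open Polynomial

-- L1: charpoly invariant under conjugation
theorem charpoly_conj_of {R : Type*} [CommRing R] {m : Type*} [Fintype m] [DecidableEq m]
    (P Q M : Matrix m m R) (hPQ : P * Q = 1) (hQP : Q * P = 1) :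
    (P * M * Q).charpoly = M.charpoly := by
  have hscal : P.map (C : R →+* R[X]) * (Matrix.scalar m (X : R[X])) * Q.map (C : R →+* R[X])
      = Matrix.scalar m (X : R[X]) := by
    rw [scalar_apply, ← smul_one_eq_diagonal, Matrix.mul_smul, Matrix.mul_one,
      Matrix.smul_mul, ← Matrix.map_mul, hPQ, Matrix.map_one _ (map_zero C) (map_one C)]
  have key : charmatrix (P * M * Q) =
      P.map (C : R →+* R[X]) * charmatrix M * Q.map (C : R →+* R[X]) := by
    unfold charmatrix
    rw [mul_sub, sub_mul, hscal]
    congr 1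
    simp only [RingHom.mapMatrix_apply, Matrix.map_mul]
  unfold Matrix.charpoly
  rw [key, det_mul, det_mul, mul_comm, ← mul_assoc, ← det_mul, ← Matrix.map_mul, hQP]
  simp

-- L2: charpoly of a diagonal matrix
theorem charpoly_diagonal' {R : Type*} [CommRing R] {m : Type*} [Fintype m] [DecidableEq m]
    (d : m → R) : (diagonal d).charpoly = ∏ i, (X - C (d i)) := by
  unfold Matrix.charpoly
  have : charmatrix (diagonal d) = diagonal (fun i => (X : R[X]) - C (d i)) := by
    ext i j
    by_cases h : i = j
    · subst h; simp
    · rw [charmatrix_apply_ne _ _ _ h, diagonal_apply_ne _ h, diagonal_apply_ne _ h, map_zero,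
        neg_zero]
  rw [this, det_diagonal]

-- L4: equal multisets of values gives a permutation relating tuples (over ℝ)
theorem exists_perm_comp {nn : ℕ} (f g : Fin nn → ℝ)
    (h : Multiset.map f Finset.univ.val = Multiset.map g Finset.univ.val) :
    ∃ σ : Equiv.Perm (Fin nn), f = g ∘ σ := by
  have hof : ∀ (u : Fin nn → ℝ), Multiset.map u Finset.univ.val = ↑(List.ofFn u) := by
    intro u
    rw [List.ofFn_eq_map]
    rfl
  have hperm : (List.ofFn f).Perm (List.ofFn g) := by
    rw [← Multiset.coe_eq_coe, ← hof, ← hof, h]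
  have h1 : List.Perm (List.ofFn (f ∘ Tuple.sort f)) (List.ofFn (g ∘ Tuple.sort g)) :=
    ((Tuple.sort f).ofFn_comp_perm f).trans (hperm.trans ((Tuple.sort g).ofFn_comp_perm g).symm)
  have h2 : f ∘ Tuple.sort f = g ∘ Tuple.sort g :=
    List.ofFn_injective <| h1.eq_of_sortedLE
      (Tuple.monotone_sort f).sortedLE_ofFn (Tuple.monotone_sort g).sortedLE_ofFn
  refine ⟨(Tuple.sort f).symm.trans (Tuple.sort g), ?_⟩
  funext i
  have := congrFun h2 ((Tuple.sort f).symm i)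
  simpa using this

-- multiset of diagonal entries from charpoly
theorem multiset_eq_of_charpoly_eq {n : ℕ} (d₁ d₂ : Fin n → ℂ)
    (h : (∏ i, (X - C (d₁ i))) = ∏ i, (X - C (d₂ i))) :
    Multiset.map d₁ Finset.univ.val = Multiset.map d₂ Finset.univ.val := by
  have key : ∀ d : Fin n → ℂ,
      (∏ i, (X - C (d i))) = ((Multiset.map d Finset.univ.val).map fun a => X - C a).prod := by
    intro d
    rw [Multiset.map_map]
    rfl
  have := congrArg Polynomial.roots h
  rwa [key d₁, key d₂, roots_multiset_prod_X_sub_C, roots_multiset_prod_X_sub_C] at this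

theorem skew_diag_decomp {n : ℕ} (ω : Mat n) (h : IsSkew ω) :
    ∃ (U : Matrix (Fin n) (Fin n) ℂ) (ev : Fin n → ℝ),
      U * star U = 1 ∧ star U * U = 1 ∧
      ω.map Complex.ofRealHom =
        U * diagonal (fun i => -(Complex.I * (ev i : ℂ))) * star U := by
  set A := ω.map Complex.ofRealHom with hA
  have hAct : Aᴴ = -A := by
    ext i j
    have : ω j i = -(ω i j) := by
      have := congrFun (congrFun h i) j
      simpa [transpose_apply] using this
    simp [hA, conjTranspose_apply, map_apply, this]
  have hH : (Complex.I • A).IsHermitian := by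
    unfold Matrix.IsHermitian
    rw [conjTranspose_smul, hAct, Complex.star_def, Complex.conj_I, neg_smul, smul_neg, neg_neg]
  refine ⟨(hH.eigenvectorUnitary : Matrix (Fin n) (Fin n) ℂ), hH.eigenvalues,
    mem_unitaryGroup_iff.mp hH.eigenvectorUnitary.2,
    mem_unitaryGroup_iff'.mp hH.eigenvectorUnitary.2, ?_⟩
  have spec := hH.spectral_theorem
  have hAH : A = (-Complex.I) • (Complex.I • A) := by
    rw [smul_smul]
    simp
  calc A = (-Complex.I) • (Complex.I • A) := hAH
    _ = (-Complex.I) • ((hH.eigenvectorUnitary : Matrix (Fin n) (Fin n) ℂ) *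
          diagonal (RCLike.ofReal ∘ hH.eigenvalues) * star (hH.eigenvectorUnitary :
          Matrix (Fin n) (Fin n) ℂ)) := congrArg (fun M => (-Complex.I) • M) spec
    _ = (hH.eigenvectorUnitary : Matrix (Fin n) (Fin n) ℂ) *
          ((-Complex.I) • diagonal (RCLike.ofReal ∘ hH.eigenvalues)) * star (hH.eigenvectorUnitary :
          Matrix (Fin n) (Fin n) ℂ) := by
        rw [← Matrix.smul_mul, ← Matrix.mul_smul]
    _ = (hH.eigenvectorUnitary : Matrix (Fin n) (Fin n) ℂ) *
          diagonal (fun i => -(Complex.I * (hH.eigenvalues i : ℂ))) * star (hH.eigenvectorUnitary :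
          Matrix (Fin n) (Fin n) ℂ) := by
        have hd : (-Complex.I) • diagonal (RCLike.ofReal ∘ hH.eigenvalues) =
            diagonal (fun i => -(Complex.I * (hH.eigenvalues i : ℂ))) := by
          have hfun : ((-Complex.I) • (RCLike.ofReal ∘ hH.eigenvalues) : Fin n → ℂ) =
              fun i => -(Complex.I * (hH.eigenvalues i : ℂ)) := by
            funext i
            simp [Pi.smul_apply, smul_eq_mul, Function.comp]
          rw [← diagonal_smul, hfun]
        rw [hd]

theorem exists_complex_intertwiner {n : ℕ} (ω₁ ω₂ : Mat n) (h₁ : IsSkew ω₁) (h₂ : IsSkew ω₂)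
    (hcp : ω₁.charpoly = ω₂.charpoly) :
    ∃ V : Matrix (Fin n) (Fin n) ℂ, V.det ≠ 0 ∧
      V * ω₁.map Complex.ofRealHom = ω₂.map Complex.ofRealHom * V := by
  obtain ⟨U₁, ev₁, hU₁a, hU₁b, hD₁⟩ := skew_diag_decomp ω₁ h₁
  obtain ⟨U₂, ev₂, hU₂a, hU₂b, hD₂⟩ := skew_diag_decomp ω₂ h₂
  set d₁ : Fin n → ℂ := fun i => -(Complex.I * (ev₁ i : ℂ)) with hd₁def
  set d₂ : Fin n → ℂ := fun i => -(Complex.I * (ev₂ i : ℂ)) with hd₂def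
  -- charpoly equality over ℂ for the diagonal parts
  have hcpC : (ω₁.map Complex.ofRealHom).charpoly = (ω₂.map Complex.ofRealHom).charpoly := by
    rw [charpoly_map, charpoly_map, hcp]
  have hcp₁ : (ω₁.map Complex.ofRealHom).charpoly = ∏ i, (X - C (d₁ i)) := by
    rw [hD₁, charpoly_conj_of _ _ _ hU₁a hU₁b, charpoly_diagonal']
  have hcp₂ : (ω₂.map Complex.ofRealHom).charpoly = ∏ i, (X - C (d₂ i)) := by
    rw [hD₂, charpoly_conj_of _ _ _ hU₂a hU₂b, charpoly_diagonal']
  have hms : Multiset.map d₁ Finset.univ.val = Multiset.map d₂ Finset.univ.val :=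
    multiset_eq_of_charpoly_eq d₁ d₂ (by rw [← hcp₁, ← hcp₂, hcpC])
  -- deduce a permutation for the real eigenvalues
  have hmsr : Multiset.map ev₁ Finset.univ.val = Multiset.map ev₂ Finset.univ.val := by
    have hinj : Function.Injective (fun r : ℝ => -(Complex.I * (r : ℂ))) := by
      intro a b hab
      simp only [neg_inj] at hab
      exact_mod_cast mul_left_cancel₀ Complex.I_ne_zero hab
    apply Multiset.map_injective hinj
    rw [Multiset.map_map, Multiset.map_map]
    exact hms
  obtain ⟨σ, hσ⟩ := exists_perm_comp ev₁ ev₂ hmsr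
  set τ := σ.symm with hτ
  set Pm : Matrix (Fin n) (Fin n) ℂ := τ.toPEquiv.toMatrix with hPm
  have hPdiag : Pm * diagonal d₁ = diagonal d₂ * Pm := by
    rw [hPm, PEquiv.toMatrix_toPEquiv_mul, PEquiv.mul_toMatrix_toPEquiv]
    ext i j
    simp only [submatrix_apply, id_eq]
    rcases eq_or_ne (τ i) j with hij | hij
    · subst hij
      rw [diagonal_apply_eq, Equiv.symm_apply_apply, diagonal_apply_eq]
      show -(Complex.I * ((ev₁ (τ i) : ℝ) : ℂ)) = -(Complex.I * ((ev₂ i : ℝ) : ℂ))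
      have hev : ev₁ (τ i) = ev₂ i := by rw [hσ]; simp [hτ]
      rw [hev]
    · rw [diagonal_apply_ne _ hij, diagonal_apply_ne]
      intro hc
      exact hij (by rw [hc, Equiv.apply_symm_apply])
  refine ⟨U₂ * Pm * star U₁, ?_, ?_⟩
  · have hdU₁ : U₁.det * (star U₁).det = 1 := by rw [← det_mul, hU₁a, det_one]
    have hdU₂ : U₂.det * (star U₂).det = 1 := by rw [← det_mul, hU₂a, det_one]
    have hPdet : Pm.det ≠ 0 := by
      have h := Matrix.det_permutation (R := ℂ) τ
      rw [hPm]
      show (Equiv.Perm.permMatrix ℂ τ).det ≠ 0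
      rw [h]
      simp
    rw [det_mul, det_mul]
    exact mul_ne_zero (mul_ne_zero (left_ne_zero_of_mul_eq_one hdU₂) hPdet)
      (right_ne_zero_of_mul_eq_one hdU₁)
  · rw [hD₁, hD₂]
    calc (U₂ * Pm * star U₁) * (U₁ * diagonal d₁ * star U₁)
        = U₂ * Pm * (star U₁ * U₁) * diagonal d₁ * star U₁ := by
          simp only [Matrix.mul_assoc]
      _ = U₂ * (Pm * diagonal d₁) * star U₁ := by
          rw [hU₁b]; simp only [Matrix.mul_one, Matrix.mul_assoc]
      _ = U₂ * (diagonal d₂ * Pm) * star U₁ := by rw [hPdiag]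
      _ = U₂ * diagonal d₂ * (star U₂ * U₂) * Pm * star U₁ := by
          rw [hU₂b]; simp only [Matrix.mul_one, Matrix.mul_assoc]
      _ = (U₂ * diagonal d₂ * star U₂) * (U₂ * Pm * star U₁) := by
          simp only [Matrix.mul_assoc]

theorem exists_real_intertwiner {n : ℕ} (ω₁ ω₂ : Mat n) (V : Matrix (Fin n) (Fin n) ℂ)
    (hVdet : V.det ≠ 0) (hVA : V * ω₁.map Complex.ofRealHom = ω₂.map Complex.ofRealHom * V) :
    ∃ Y : Mat n, Y.det ≠ 0 ∧ ω₂ * Y = Y * ω₁ := by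
  set S : Mat n := Matrix.of (fun i j => (V i j).re) with hSdef
  set T : Mat n := Matrix.of (fun i j => (V i j).im) with hTdef
  have hentry : ∀ i j, ∑ k, V i k * ((ω₁ k j : ℝ) : ℂ) = ∑ k, ((ω₂ i k : ℝ) : ℂ) * V k j := by
    intro i j
    have := congrFun (congrFun hVA i) j
    simpa [Matrix.mul_apply, Matrix.map_apply] using this
  have hS : S * ω₁ = ω₂ * S := by
    ext i j
    have := congrArg Complex.re (hentry i j)
    rw [Complex.re_sum, Complex.re_sum] at this
    simpa [Matrix.mul_apply, Complex.mul_re, hSdef] using this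
  have hT : T * ω₁ = ω₂ * T := by
    ext i j
    have := congrArg Complex.im (hentry i j)
    rw [Complex.im_sum, Complex.im_sum] at this
    simpa [Matrix.mul_apply, Complex.mul_im, hTdef] using this
  set M : Matrix (Fin n) (Fin n) ℝ[X] :=
    S.map (C : ℝ →+* ℝ[X]) + (X : ℝ[X]) • T.map (C : ℝ →+* ℝ[X]) with hMdef
  set p : ℝ[X] := M.det with hpdef
  have hMapply : ∀ i j, M i j = C (S i j) + X * C (T i j) := by
    intro i j
    rw [hMdef]
    simp [Matrix.add_apply, Matrix.smul_apply, smul_eq_mul]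
  have hpI : (Polynomial.eval₂RingHom (Complex.ofRealHom) Complex.I) p = V.det := by
    rw [hpdef, RingHom.map_det]
    congr 1
    ext i j
    rw [RingHom.mapMatrix_apply, Matrix.map_apply, hMapply i j]
    simp only [coe_eval₂RingHom, eval₂_add, eval₂_C, eval₂_mul, eval₂_X]
    apply Complex.ext <;> simp [hSdef, hTdef]
  have hp0 : p ≠ 0 := by
    intro h
    rw [h, map_zero] at hpI
    exact hVdet hpI.symm
  have ht : ∃ t : ℝ, Polynomial.eval t p ≠ 0 := by
    by_contra h
    push_neg at h
    exact hp0 (Polynomial.zero_of_eval_zero p h)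
  obtain ⟨t, ht⟩ := ht
  refine ⟨S + t • T, ?_, ?_⟩
  · have : (Polynomial.evalRingHom t) p = (S + t • T).det := by
      rw [hpdef, RingHom.map_det]
      congr 1
      ext i j
      rw [RingHom.mapMatrix_apply, Matrix.map_apply, hMapply i j]
      simp only [coe_evalRingHom, eval_add, eval_C, eval_mul, eval_X, Matrix.add_apply,
        Matrix.smul_apply, smul_eq_mul]
    rw [← this]
    exact ht
  · rw [Matrix.mul_add, Matrix.add_mul, Matrix.mul_smul, Matrix.smul_mul, hS, hT]

theorem orth_of_real_intertwiner {n : ℕ} (ω₁ ω₂ : Mat n) (h₁ : IsSkew ω₁) (h₂ : IsSkew ω₂)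
    (Y : Mat n) (hdet : Y.det ≠ 0) (hY : ω₂ * Y = Y * ω₁) :
    ∃ r : Mat n, IsOrth r ∧ ω₂ = r * ω₁ * r⁻¹ := by
  have ct_eq : ∀ M : Mat n, Mᴴ = Mᵀ := by
    intro M; ext i j; simp [conjTranspose_apply]
  have hYt : Yᵀ * ω₂ = ω₁ * Yᵀ := by
    have := congrArg Matrix.transpose hY
    rw [transpose_mul, transpose_mul, h₁, h₂, Matrix.mul_neg, Matrix.neg_mul] at this
    exact neg_inj.mp this
  set P : Mat n := Yᴴ * Y with hPdef
  have hPsd : P.PosSemidef := posSemidef_conjTranspose_mul_self Y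
  have hPh : P.IsHermitian := hPsd.1
  have hPY : P = Yᵀ * Y := by rw [hPdef, ct_eq]
  have hcomP : ω₁ * P = P * ω₁ := by
    rw [hPY]
    calc ω₁ * (Yᵀ * Y) = (ω₁ * Yᵀ) * Y := by rw [Matrix.mul_assoc]
      _ = Yᵀ * (ω₂ * Y) := by rw [← hYt, Matrix.mul_assoc]
      _ = Yᵀ * (Y * ω₁) := by rw [hY]
      _ = Yᵀ * Y * ω₁ := by rw [Matrix.mul_assoc]
  set ev : Fin n → ℝ := hPh.eigenvalues with hevdef
  set W : Mat n := (hPh.eigenvectorUnitary : Mat n) with hWdef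
  have hW1 : W * star W = 1 := mem_unitaryGroup_iff.mp hPh.eigenvectorUnitary.2
  have hW2 : star W * W = 1 := mem_unitaryGroup_iff'.mp hPh.eigenvectorUnitary.2
  have spec : P = W * diagonal ev * star W := by
    have h := hPh.spectral_theorem
    rwa [RCLike.ofReal_real_eq_id, Function.id_comp] at h
  have hdetP : P.det ≠ 0 := by
    rw [hPY, det_mul, det_transpose]
    exact mul_ne_zero hdet hdet
  have hev0 : ∀ i, ev i ≠ 0 := by
    have hprod : P.det = ∏ i, ev i := by
      have h := hPh.det_eq_prod_eigenvalues
      simpa using h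
    rw [hprod] at hdetP
    intro i hi
    exact hdetP (Finset.prod_eq_zero (Finset.mem_univ i) hi)
  set s : Fin n → ℝ := fun i => Real.sqrt (ev i) with hsdef
  have hss : ∀ i, s i * s i = ev i := fun i => Real.mul_self_sqrt (hPsd.eigenvalues_nonneg i)
  have hs0 : ∀ i, s i ≠ 0 := by
    intro i hi
    exact hev0 i (by rw [← hss i, hi, mul_zero])
  have hsinj : ∀ i j, ev i = ev j → s i = s j := fun i j h => by rw [hsdef]; simp [h]
  set si : Fin n → ℝ := fun i => (s i)⁻¹ with hsidef
  -- conjugation helpers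
  have hconj : ∀ M N : Mat n, (star W * M * W) * (star W * N * W) = star W * (M * N) * W := by
    intro M N
    calc (star W * M * W) * (star W * N * W)
        = star W * (M * ((W * star W) * (N * W))) := by simp only [Matrix.mul_assoc]
      _ = star W * (M * (N * W)) := by rw [hW1, Matrix.one_mul]
      _ = star W * (M * N) * W := by simp only [Matrix.mul_assoc]
  have hconj' : ∀ M N : Fin n → ℝ, (W * diagonal M * star W) * (W * diagonal N * star W)
      = W * diagonal (fun i => M i * N i) * star W := by
    intro M N
    calc (W * diagonal M * star W) * (W * diagonal N * star W)
        = W * (diagonal M * ((star W * W) * (diagonal N * star W))) := by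
          simp only [Matrix.mul_assoc]
      _ = W * (diagonal M * (diagonal N * star W)) := by rw [hW2, Matrix.one_mul]
      _ = W * (diagonal M * diagonal N) * star W := by simp only [Matrix.mul_assoc]
      _ = W * diagonal (fun i => M i * N i) * star W := by rw [diagonal_mul_diagonal]
  set B : Mat n := W * diagonal s * star W with hBdef
  set Bi : Mat n := W * diagonal si * star W with hBidef
  have hBB : B * B = P := by
    rw [hBdef, hconj', spec]
    congr 1
    · congr 1
      exact congrArg diagonal (funext hss)
  have hBBi : B * Bi = 1 := by
    rw [hBdef, hBidef, hconj']
    have : (fun i => s i * si i) = fun _ => (1 : ℝ) := by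
      funext i; exact mul_inv_cancel₀ (hs0 i)
    rw [this, diagonal_one, Matrix.mul_one, hW1]
  have hBiB : Bi * B = 1 := by
    rw [hBdef, hBidef, hconj']
    have : (fun i => si i * s i) = fun _ => (1 : ℝ) := by
      funext i; exact inv_mul_cancel₀ (hs0 i)
    rw [this, diagonal_one, Matrix.mul_one, hW1]
  have hWst : star W = Wᵀ := by rw [star_eq_conjTranspose, ct_eq]
  have hBit : Biᵀ = Bi := by
    rw [hBidef, hWst, transpose_mul, transpose_mul, transpose_transpose, diagonal_transpose,
      Matrix.mul_assoc]
  -- commutation of ω₁ with Bi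
  set Cm : Mat n := star W * ω₁ * W with hCmdef
  have hΦP : star W * P * W = diagonal ev := by
    rw [spec]
    calc star W * (W * diagonal ev * star W) * W
        = (star W * W) * (diagonal ev * (star W * W)) := by simp only [Matrix.mul_assoc]
      _ = diagonal ev := by rw [hW2, Matrix.mul_one, Matrix.one_mul]
  have hCmD : Cm * diagonal ev = diagonal ev * Cm := by
    calc Cm * diagonal ev = (star W * ω₁ * W) * (star W * P * W) := by rw [hCmdef, hΦP]
      _ = star W * (ω₁ * P) * W := hconj _ _
      _ = star W * (P * ω₁) * W := by rw [hcomP]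
      _ = (star W * P * W) * (star W * ω₁ * W) := (hconj _ _).symm
      _ = diagonal ev * Cm := by rw [hCmdef, hΦP]
  have hCmDsi : Cm * diagonal si = diagonal si * Cm := by
    ext i j
    rw [mul_diagonal, diagonal_mul]
    rcases eq_or_ne (Cm i j) 0 with hc | hc
    · rw [hc, zero_mul, mul_zero]
    · have h0 := congrFun (congrFun hCmD i) j
      rw [mul_diagonal, diagonal_mul, mul_comm (Cm i j) (ev j)] at h0
      have hevij : ev j = ev i := mul_right_cancel₀ hc h0
      rw [hsidef]
      simp only []
      rw [hsinj j i hevij, mul_comm]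
  have hωW : W * Cm * star W = ω₁ := by
    rw [hCmdef]
    calc W * (star W * ω₁ * W) * star W
        = (W * star W) * (ω₁ * (W * star W)) := by simp only [Matrix.mul_assoc]
      _ = ω₁ := by rw [hW1, Matrix.mul_one, Matrix.one_mul]
  have hcommBi : ω₁ * Bi = Bi * ω₁ := by
    have hconj'' : ∀ M N : Mat n, (W * M * star W) * (W * N * star W) = W * (M * N) * star W := by
      intro M N
      calc (W * M * star W) * (W * N * star W)
          = W * (M * ((star W * W) * (N * star W))) := by simp only [Matrix.mul_assoc]
        _ = W * (M * (N * star W)) := by rw [hW2, Matrix.one_mul]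
        _ = W * (M * N) * star W := by simp only [Matrix.mul_assoc]
    calc ω₁ * Bi = (W * Cm * star W) * (W * diagonal si * star W) := by rw [hωW, hBidef]
      _ = W * (Cm * diagonal si) * star W := hconj'' _ _
      _ = W * (diagonal si * Cm) * star W := by rw [hCmDsi]
      _ = (W * diagonal si * star W) * (W * Cm * star W) := (hconj'' _ _).symm
      _ = Bi * ω₁ := by rw [hωW, hBidef]
  -- the orthogonal matrix
  have hrt : (Y * Bi)ᵀ = Bi * Yᵀ := by rw [transpose_mul, hBit]
  have hrtr : (Y * Bi)ᵀ * (Y * Bi) = 1 := by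
    rw [hrt]
    calc Bi * Yᵀ * (Y * Bi) = Bi * ((Yᵀ * Y) * Bi) := by simp only [Matrix.mul_assoc]
      _ = Bi * ((B * B) * Bi) := by rw [← hPY, ← hBB]
      _ = (Bi * B) * (B * Bi) := by simp only [Matrix.mul_assoc]
      _ = 1 := by rw [hBiB, hBBi, Matrix.one_mul]
  have hrrt : (Y * Bi) * (Y * Bi)ᵀ = 1 := mul_eq_one_comm.mp hrtr
  have hcr : ω₂ * (Y * Bi) = (Y * Bi) * ω₁ := by
    have h1 : ω₂ * Y * Bi = Y * ω₁ * Bi := by rw [hY]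
    have h2 : Y * (ω₁ * Bi) = Y * (Bi * ω₁) := by rw [hcommBi]
    calc ω₂ * (Y * Bi) = ω₂ * Y * Bi := (Matrix.mul_assoc _ _ _).symm
      _ = Y * ω₁ * Bi := h1
      _ = Y * (ω₁ * Bi) := Matrix.mul_assoc _ _ _
      _ = Y * (Bi * ω₁) := h2
      _ = Y * Bi * ω₁ := (Matrix.mul_assoc _ _ _).symm
  have hinv : (Y * Bi)⁻¹ = (Y * Bi)ᵀ := inv_eq_right_inv hrrt
  refine ⟨Y * Bi, ⟨hrrt, hrtr⟩, ?_⟩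
  rw [hinv, ← hcr, Matrix.mul_assoc, hrrt, Matrix.mul_one]

end Aux

/-- Two skew-symmetric real matrices are orthogonally conjugate iff they have the same
characteristic polynomial. -/
theorem stmt16 {n : ℕ} (ω₁ ω₂ : Mat n) (h₁ : IsSkew ω₁) (h₂ : IsSkew ω₂) :
    (∃ r : Mat n, IsOrth r ∧ ω₂ = r * ω₁ * r⁻¹) ↔ ω₁.charpoly = ω₂.charpoly := by
  constructor
  · rintro ⟨r, hr, rfl⟩
    have hinv : r⁻¹ = rᵀ := inv_eq_right_inv hr.1
    rw [hinv]
    exact (charpoly_conj_of r rᵀ ω₁ hr.1 hr.2).symm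
  · intro hcp
    obtain ⟨V, hVdet, hVA⟩ := exists_complex_intertwiner ω₁ ω₂ h₁ h₂ hcp
    obtain ⟨Y, hYdet, hY⟩ := exists_real_intertwiner ω₁ ω₂ V hVdet hVA
    exact orth_of_real_intertwiner ω₁ ω₂ h₁ h₂ Y hYdet hY
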